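/- Let K ≥ 1, N ≥ 1 and let h_{k,i} ∈ ℝ^p for k = 1,…,K and i = 1,…,N be feature vectors whose global mean μ_G is zero. Define the mean-squared-error linear probing loss L(W,b) = (1/(2KN))·∑_{k=1}^K ∑_{i=1}^N ‖W h_{k,i} + b − e_k‖² over W ∈ ℝ^{K×p} and b ∈ ℝ^K, where e_k is the k-th standard basis vector of ℝ^K. Then the pair W* = (1/K)·(∑_{k=1}^K e_k μ_k^T)·Σ_T† and b* = (1/K)·𝟙_K (the vector with all entries 1/K) is a global minimizer of L, i.e., L(W*,b*) ≤ L(W,b) for all W ∈ ℝ^{K×p} and b ∈ ℝ^K. -/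

import Mathlib

open Matrix Finset

noncomputable section

/-- The `k`-th class mean `μ_k = (1/N) ∑_i h_{k,i}`. -/
def classMean {K N p : ℕ} (H : Fin K → Fin N → (Fin p → ℝ)) (k : Fin K) : Fin p → ℝ :=
  (N : ℝ)⁻¹ • ∑ i, H k i

/-- The global mean `μ_G = (1/(KN)) ∑_{k,i} h_{k,i}`. -/
def globalMean {K N p : ℕ} (H : Fin K → Fin N → (Fin p → ℝ)) : Fin p → ℝ :=
  ((K : ℝ) * (N : ℝ))⁻¹ • ∑ k, ∑ i, H k i

/-- Within-class covariance `Σ_W = (1/(KN)) ∑_{k,i} (h_{k,i} − μ_k)(h_{k,i} − μ_k)ᵀ`. -/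
def SigmaW {K N p : ℕ} (H : Fin K → Fin N → (Fin p → ℝ)) : Matrix (Fin p) (Fin p) ℝ :=
  ((K : ℝ) * (N : ℝ))⁻¹ •
    ∑ k, ∑ i, vecMulVec (H k i - classMean H k) (H k i - classMean H k)

/-- Between-class covariance `Σ_B = (1/K) ∑_k (μ_k − μ_G)(μ_k − μ_G)ᵀ`. -/
def SigmaB {K N p : ℕ} (H : Fin K → Fin N → (Fin p → ℝ)) : Matrix (Fin p) (Fin p) ℝ :=
  (K : ℝ)⁻¹ • ∑ k, vecMulVec (classMean H k - globalMean H) (classMean H k - globalMean H)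

/-- Overall covariance `Σ_T = (1/(KN)) ∑_{k,i} (h_{k,i} − μ_G)(h_{k,i} − μ_G)ᵀ`. -/
def SigmaT {K N p : ℕ} (H : Fin K → Fin N → (Fin p → ℝ)) : Matrix (Fin p) (Fin p) ℝ :=
  ((K : ℝ) * (N : ℝ))⁻¹ •
    ∑ k, ∑ i, vecMulVec (H k i - globalMean H) (H k i - globalMean H)
/-- `Ad` is the Moore–Penrose pseudoinverse of `A`: the four Penrose conditions. -/
def IsMoorePenrose {p : ℕ} (A Ad : Matrix (Fin p) (Fin p) ℝ) : Prop :=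
  A * Ad * A = A ∧ Ad * A * Ad = Ad ∧ (A * Ad)ᵀ = A * Ad ∧ (Ad * A)ᵀ = Ad * A

/-- MSE linear probing loss `L(W,b) = (1/(2KN)) ∑_{k,i} ‖W h_{k,i} + b − e_k‖²`. -/
def mseLoss {K N p : ℕ} (H : Fin K → Fin N → (Fin p → ℝ))
    (W : Matrix (Fin K) (Fin p) ℝ) (b : Fin K → ℝ) : ℝ :=
  (2 * (K : ℝ) * (N : ℝ))⁻¹ *
    ∑ k, ∑ i, ∑ j, ((W.mulVec (H k i) + b - Pi.single k 1 : Fin K → ℝ) j) ^ 2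

variable {K N p : ℕ}

lemma sum_H_eq_zero (hK : 1 ≤ K) (hN : 1 ≤ N) (H : Fin K → Fin N → (Fin p → ℝ))
    (hG : globalMean H = 0) : ∑ k, ∑ i, H k i = 0 := by
  have hKN : ((K:ℝ) * (N:ℝ))⁻¹ ≠ 0 := by
    have h1 : (0:ℝ) < (K:ℝ) := by exact_mod_cast hK
    have h2 : (0:ℝ) < (N:ℝ) := by exact_mod_cast hN
    positivity
  unfold globalMean at hG
  rcases smul_eq_zero.mp hG with h | h
  · exact absurd h hKN
  · exact h

lemma sigmaT_mulVec (H : Fin K → Fin N → (Fin p → ℝ)) (hG : globalMean H = 0)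
    (y : Fin p → ℝ) :
    SigmaT H *ᵥ y = ((K:ℝ)*(N:ℝ))⁻¹ • ∑ k, ∑ i, (H k i ⬝ᵥ y) • H k i := by
  unfold SigmaT
  rw [hG]
  funext x
  simp [Matrix.mulVec, Matrix.vecMulVec_apply, dotProduct, Finset.sum_apply,
    Matrix.sum_apply, Finset.mul_sum, Finset.sum_mul, mul_comm, mul_assoc, mul_left_comm]
  rw [Finset.sum_comm]
  refine Finset.sum_congr rfl fun k _ => ?_
  rw [Finset.sum_comm]

lemma sum_sum_dot (H : Fin K → Fin N → (Fin p → ℝ)) (v : Fin p → ℝ) :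
    ∑ k, ∑ i, v ⬝ᵥ H k i = v ⬝ᵥ (∑ k, ∑ i, H k i) := by
  simp only [dotProduct, Finset.sum_apply, Finset.mul_sum]
  conv_rhs => rw [Finset.sum_comm]
  exact Finset.sum_congr rfl fun k _ => by rw [Finset.sum_comm]

lemma aux1 (v w : Fin p → ℝ) (c S : ℝ) :
    ∑ x, v x * (c * (S * w x)) = (c * S) * ∑ x, v x * w x := by
  rw [Finset.mul_sum]; exact Finset.sum_congr rfl fun x _ => by ring

lemma aux2 (v w : Fin p → ℝ) (c S : ℝ) :
    ∑ x, c * (S * (v x * w x)) = (c * S) * ∑ x, v x * w x := by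
  rw [Finset.mul_sum]; exact Finset.sum_congr rfl fun x _ => by ring

lemma dot_sigmaT (H : Fin K → Fin N → (Fin p → ℝ)) (hG : globalMean H = 0)
    (u d : Fin p → ℝ) :
    u ⬝ᵥ (SigmaT H *ᵥ d) = ((K:ℝ)*(N:ℝ))⁻¹ * ∑ k, ∑ i, (u ⬝ᵥ H k i) * (H k i ⬝ᵥ d) := by
  rw [sigmaT_mulVec H hG]
  simp only [dotProduct, Finset.sum_apply, Pi.smul_apply, smul_eq_mul, Finset.mul_sum]
  rw [Finset.sum_comm]
  refine Finset.sum_congr rfl fun k _ => ?_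
  rw [Finset.sum_comm]
  refine Finset.sum_congr rfl fun n _ => ?_
  rw [aux1, aux2]
  ring

lemma sum_dot {n : ℕ} (f : Fin n → (Fin p → ℝ)) (r : Fin p → ℝ) :
    (∑ i, f i) ⬝ᵥ r = ∑ i, f i ⬝ᵥ r := by
  simp only [dotProduct, Finset.sum_apply, Finset.sum_mul]
  rw [Finset.sum_comm]

lemma ker_dot (hK : 1 ≤ K) (hN : 1 ≤ N) (H : Fin K → Fin N → (Fin p → ℝ))
    (hG : globalMean H = 0) {r : Fin p → ℝ} (hr : SigmaT H *ᵥ r = 0) :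
    ∀ k i, H k i ⬝ᵥ r = 0 := by
  have hKp : (0:ℝ) < (K:ℝ) := by exact_mod_cast hK
  have hNp : (0:ℝ) < (N:ℝ) := by exact_mod_cast hN
  have h0 : r ⬝ᵥ (SigmaT H *ᵥ r) = 0 := by rw [hr, dotProduct_zero]
  rw [dot_sigmaT H hG r r] at h0
  have hKN : ((K:ℝ)*(N:ℝ))⁻¹ ≠ 0 := by positivity
  have hsum := (mul_eq_zero.mp h0).resolve_left hKN
  have hsum' : ∑ k, ∑ i, (H k i ⬝ᵥ r)^2 = 0 := by
    rw [← hsum]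
    exact Finset.sum_congr rfl fun k _ => Finset.sum_congr rfl fun i _ => by
      rw [dotProduct_comm]; ring
  intro k i
  have h1 := (Finset.sum_eq_zero_iff_of_nonneg
    (fun k _ => Finset.sum_nonneg fun i _ => sq_nonneg _)).mp hsum' k (Finset.mem_univ k)
  have h2 := (Finset.sum_eq_zero_iff_of_nonneg
    (fun i _ => sq_nonneg _)).mp h1 i (Finset.mem_univ i)
  exact pow_eq_zero_iff (two_ne_zero) |>.mp h2

lemma proj_classMean (hK : 1 ≤ K) (hN : 1 ≤ N) (H : Fin K → Fin N → (Fin p → ℝ))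
    (hG : globalMean H = 0) (STd : Matrix (Fin p) (Fin p) ℝ)
    (hSTd : IsMoorePenrose (SigmaT H) STd) (j : Fin K) :
    (STd * SigmaT H) *ᵥ classMean H j = classMean H j := by
  obtain ⟨h1, h2, h3, h4⟩ := hSTd
  set A := SigmaT H with hA
  set μ := classMean H j with hμ
  set r : Fin p → ℝ := μ - (STd * A) *ᵥ μ with hrdef
  have hAr : A *ᵥ r = 0 := by
    rw [hrdef, Matrix.mulVec_sub, Matrix.mulVec_mulVec, ← Matrix.mul_assoc, h1, sub_self]
  have hH : ∀ k i, H k i ⬝ᵥ r = 0 := ker_dot hK hN H hG hAr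
  have hμr : μ ⬝ᵥ r = 0 := by
    rw [hμ]
    show ((N:ℝ)⁻¹ • ∑ i, H j i) ⬝ᵥ r = 0
    rw [smul_dotProduct, sum_dot]
    simp [hH]
  have har : ((STd * A) *ᵥ μ) ⬝ᵥ r = 0 := by
    rw [dotProduct_comm, Matrix.dotProduct_mulVec, ← Matrix.mulVec_transpose, h4,
      ← Matrix.mulVec_mulVec, hAr, Matrix.mulVec_zero, zero_dotProduct]
  have hrr : r ⬝ᵥ r = 0 := by
    rw [hrdef]
    nth_rewrite 1 [sub_dotProduct]
    rw [show (μ - (STd * A) *ᵥ μ) = r from rfl] at *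
    rw [hμr, har, sub_zero]
  have hr0 : r = 0 := dotProduct_self_eq_zero.mp hrr
  exact (sub_eq_zero.mp hr0).symm

lemma vecMul_proj (hK : 1 ≤ K) (hN : 1 ≤ N) (H : Fin K → Fin N → (Fin p → ℝ))
    (hG : globalMean H = 0) (STd : Matrix (Fin p) (Fin p) ℝ)
    (hSTd : IsMoorePenrose (SigmaT H) STd) (j : Fin K) :
    classMean H j ᵥ* (STd * SigmaT H) = classMean H j := by
  rw [← hSTd.2.2.2, Matrix.vecMul_transpose]
  exact proj_classMean hK hN H hG STd hSTd j

lemma dot_sum {n : ℕ} (f : Fin n → (Fin p → ℝ)) (r : Fin p → ℝ) :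
    r ⬝ᵥ (∑ i, f i) = ∑ i, r ⬝ᵥ f i := by
  simp only [dotProduct, Finset.sum_apply, Finset.mul_sum]
  rw [Finset.sum_comm]

lemma core (hK : 1 ≤ K) (hN : 1 ≤ N) (H : Fin K → Fin N → (Fin p → ℝ))
    (hG : globalMean H = 0) (STd : Matrix (Fin p) (Fin p) ℝ)
    (hSTd : IsMoorePenrose (SigmaT H) STd) (j : Fin K) (w : Fin p → ℝ) (β : ℝ) :
    ∑ k, ∑ i, ((K:ℝ)⁻¹ * ((classMean H j ᵥ* STd) ⬝ᵥ H k i) + (K:ℝ)⁻¹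
        - (Pi.single k 1 : Fin K → ℝ) j)^2
      ≤ ∑ k, ∑ i, (w ⬝ᵥ H k i + β - (Pi.single k 1 : Fin K → ℝ) j)^2 := by
  have hKp : (0:ℝ) < (K:ℝ) := by exact_mod_cast hK
  have hNp : (0:ℝ) < (N:ℝ) := by exact_mod_cast hN
  set u : Fin p → ℝ := classMean H j ᵥ* STd with hu
  set d : Fin p → ℝ := w - (K:ℝ)⁻¹ • u with hd
  set c : ℝ := β - (K:ℝ)⁻¹ with hc
  set δ : Fin K → ℝ := fun k => (Pi.single k 1 : Fin K → ℝ) j with hδ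
  have hs0 : ∑ k, ∑ i, H k i = 0 := sum_H_eq_zero hK hN H hG
  have hB : ∑ k, ∑ i, u ⬝ᵥ H k i = 0 := by rw [sum_sum_dot, hs0, dotProduct_zero]
  have hC : ∑ k, ∑ i, d ⬝ᵥ H k i = 0 := by rw [sum_sum_dot, hs0, dotProduct_zero]
  have hdelta : ∑ k, δ k = 1 := by
    simp [hδ, Pi.single_apply]
  have hA : ∑ k, ∑ i, (u ⬝ᵥ H k i) * (d ⬝ᵥ H k i)
      = (K:ℝ) * (N:ℝ) * (classMean H j ⬝ᵥ d) := by
    have h5 := dot_sigmaT H hG u d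
    have hproj : u ᵥ* SigmaT H = classMean H j := by
      rw [hu, Matrix.vecMul_vecMul]
      exact vecMul_proj hK hN H hG STd hSTd j
    rw [Matrix.dotProduct_mulVec, hproj] at h5
    have h6 : ∑ k, ∑ i, (u ⬝ᵥ H k i) * (H k i ⬝ᵥ d)
        = (K:ℝ) * (N:ℝ) * (classMean H j ⬝ᵥ d) := by
      rw [h5]
      field_simp
    rw [← h6]
    exact Finset.sum_congr rfl fun k _ => Finset.sum_congr rfl fun i _ => by
      rw [dotProduct_comm (H k i) d]
  have hE : ∑ k, ∑ i, δ k * (d ⬝ᵥ H k i) = (N:ℝ) * (classMean H j ⬝ᵥ d) := by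
    have h7 : ∀ k, ∑ i, δ k * (d ⬝ᵥ H k i) = δ k * (d ⬝ᵥ ∑ i, H k i) := by
      intro k; rw [dot_sum, Finset.mul_sum]
    rw [show (∑ k, ∑ i, δ k * (d ⬝ᵥ H k i)) = ∑ k, δ k * (d ⬝ᵥ ∑ i, H k i) from
      Finset.sum_congr rfl fun k _ => h7 k]
    simp only [hδ, Pi.single_apply, ite_mul, one_mul, zero_mul, Finset.sum_ite_eq,
      Finset.mem_univ, if_true]
    have h8 : ∑ i, H j i = (N:ℝ) • classMean H j := by
      unfold classMean
      rw [smul_smul, mul_inv_cancel₀ (ne_of_gt hNp), one_smul]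
    rw [h8, dotProduct_smul, smul_eq_mul, dotProduct_comm]
  have hD : ∑ (k : Fin K), ∑ (_ : Fin N), ((K:ℝ)⁻¹ - δ k) = 0 := by
    simp only [Finset.sum_const, Finset.card_univ, Fintype.card_fin, nsmul_eq_mul]
    rw [← Finset.mul_sum, Finset.sum_sub_distrib, Finset.sum_const, hdelta]
    simp only [Finset.card_univ, Fintype.card_fin, nsmul_eq_mul]
    field_simp
    ring
  have key : ∑ k, ∑ i, ((K:ℝ)⁻¹ * (u ⬝ᵥ H k i) + (K:ℝ)⁻¹ - δ k) * (d ⬝ᵥ H k i + c) = 0 := by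
    have split : ∑ k, ∑ i, ((K:ℝ)⁻¹ * (u ⬝ᵥ H k i) + (K:ℝ)⁻¹ - δ k) * (d ⬝ᵥ H k i + c)
        = (K:ℝ)⁻¹ * (∑ k, ∑ i, (u ⬝ᵥ H k i) * (d ⬝ᵥ H k i))
          + (c * (K:ℝ)⁻¹) * (∑ k, ∑ i, u ⬝ᵥ H k i)
          + (K:ℝ)⁻¹ * (∑ k, ∑ i, d ⬝ᵥ H k i)
          - (∑ k, ∑ i, δ k * (d ⬝ᵥ H k i))
          + c * (∑ (k : Fin K), ∑ (_ : Fin N), ((K:ℝ)⁻¹ - δ k)) := by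
      simp only [Finset.mul_sum, ← Finset.sum_add_distrib, ← Finset.sum_sub_distrib]
      exact Finset.sum_congr rfl fun k _ => Finset.sum_congr rfl fun i _ => by ring
    rw [split, hA, hB, hC, hD, hE]
    field_simp
    ring
  have expand : ∑ k, ∑ i, (w ⬝ᵥ H k i + β - δ k)^2
      = ∑ k, ∑ i, (((K:ℝ)⁻¹ * (u ⬝ᵥ H k i) + (K:ℝ)⁻¹ - δ k)^2
          + 2 * (((K:ℝ)⁻¹ * (u ⬝ᵥ H k i) + (K:ℝ)⁻¹ - δ k) * (d ⬝ᵥ H k i + c))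
          + (d ⬝ᵥ H k i + c)^2) := by
    refine Finset.sum_congr rfl fun k _ => Finset.sum_congr rfl fun i _ => ?_
    have e1 : d ⬝ᵥ H k i = w ⬝ᵥ H k i - (K:ℝ)⁻¹ * (u ⬝ᵥ H k i) := by
      rw [hd, sub_dotProduct, smul_dotProduct, smul_eq_mul]
    rw [e1, hc]
    ring
  calc ∑ k, ∑ i, ((K:ℝ)⁻¹ * (u ⬝ᵥ H k i) + (K:ℝ)⁻¹ - δ k)^2
      ≤ ∑ k, ∑ i, ((K:ℝ)⁻¹ * (u ⬝ᵥ H k i) + (K:ℝ)⁻¹ - δ k)^2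
          + ∑ k, ∑ i, (d ⬝ᵥ H k i + c)^2 := by
        refine le_add_of_nonneg_right ?_
        exact Finset.sum_nonneg fun k _ => Finset.sum_nonneg fun i _ => sq_nonneg _
    _ = ∑ k, ∑ i, (w ⬝ᵥ H k i + β - δ k)^2 := by
        rw [expand]
        simp only [Finset.sum_add_distrib]
        have h2 : ∑ k, ∑ i, 2 * (((K:ℝ)⁻¹ * (u ⬝ᵥ H k i) + (K:ℝ)⁻¹ - δ k) * (d ⬝ᵥ H k i + c))
            = 0 := by
          rw [show (∑ k, ∑ i, 2 * (((K:ℝ)⁻¹ * (u ⬝ᵥ H k i) + (K:ℝ)⁻¹ - δ k) * (d ⬝ᵥ H k i + c)))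
              = 2 * ∑ k, ∑ i, ((K:ℝ)⁻¹ * (u ⬝ᵥ H k i) + (K:ℝ)⁻¹ - δ k) * (d ⬝ᵥ H k i + c) from by
            simp [Finset.mul_sum], key, mul_zero]
        rw [h2]
        ring

/-- **Explicit minimizer of the MSE linear probing loss.** Suppose the global mean is zero.
Then `W* = (1/K)(∑_k e_k μ_kᵀ) Σ_T†` together with `b* = (1/K)𝟙` is a global minimizer of the
MSE linear probing loss. -/
theorem mse_minimizer {K N p : ℕ} (hK : 1 ≤ K) (hN : 1 ≤ N)
    (H : Fin K → Fin N → (Fin p → ℝ)) (hG : globalMean H = 0)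
    (STd : Matrix (Fin p) (Fin p) ℝ) (hSTd : IsMoorePenrose (SigmaT H) STd) :
    ∀ (W : Matrix (Fin K) (Fin p) ℝ) (b : Fin K → ℝ),
      mseLoss H
        ((K : ℝ)⁻¹ • ((∑ k, Matrix.of (fun (a : Fin K) (j : Fin p) =>
            (Pi.single k 1 : Fin K → ℝ) a * classMean H k j)) * STd))
        (fun _ => (K : ℝ)⁻¹)
      ≤ mseLoss H W b := by
  intro W b
  unfold mseLoss
  have hc : (0:ℝ) ≤ (2 * (K:ℝ) * (N:ℝ))⁻¹ := by positivity
  refine mul_le_mul_of_nonneg_left ?_ hc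
  have rot : ∀ (f : Fin K → Fin N → Fin K → ℝ),
      ∑ k, ∑ i, ∑ j, f k i j = ∑ j, ∑ k, ∑ i, f k i j := by
    intro f
    calc ∑ k, ∑ i, ∑ j, f k i j
        = ∑ k, ∑ j, ∑ i, f k i j :=
          Finset.sum_congr rfl fun k _ => by rw [Finset.sum_comm]
      _ = ∑ j, ∑ k, ∑ i, f k i j := by rw [Finset.sum_comm]
  rw [rot, rot]
  refine Finset.sum_le_sum fun j _ => ?_
  set M : Matrix (Fin K) (Fin p) ℝ := ∑ k, Matrix.of (fun (a : Fin K) (y : Fin p) =>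
      (Pi.single k 1 : Fin K → ℝ) a * classMean H k y) with hM
  have hMj : (fun x => M j x) = classMean H j := by
    funext x
    rw [hM]
    simp [Matrix.sum_apply, Pi.single_apply, ite_mul, one_mul, zero_mul,
      Finset.sum_ite_eq, Finset.mem_univ, if_true]
  have hW0 : ∀ (h : Fin p → ℝ), (((K:ℝ)⁻¹ • (M * STd)) *ᵥ h) j
      = (K:ℝ)⁻¹ * ((classMean H j ᵥ* STd) ⬝ᵥ h) := by
    intro h
    rw [Matrix.smul_mulVec, Pi.smul_apply, smul_eq_mul, ← Matrix.mulVec_mulVec]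
    congr 1
    show (fun x => M j x) ⬝ᵥ (STd *ᵥ h) = (classMean H j ᵥ* STd) ⬝ᵥ h
    rw [hMj, Matrix.dotProduct_mulVec]
  have hL : ∀ (k : Fin K) (i : Fin N),
      ((((K:ℝ)⁻¹ • (M * STd)).mulVec (H k i) + (fun _ => (K:ℝ)⁻¹) - Pi.single k 1 : Fin K → ℝ) j)
      = (K:ℝ)⁻¹ * ((classMean H j ᵥ* STd) ⬝ᵥ H k i) + (K:ℝ)⁻¹
        - (Pi.single k 1 : Fin K → ℝ) j := by
    intro k i
    simp only [Pi.add_apply, Pi.sub_apply, hW0]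
  have hR : ∀ (k : Fin K) (i : Fin N),
      ((W.mulVec (H k i) + b - Pi.single k 1 : Fin K → ℝ) j)
      = (fun x => W j x) ⬝ᵥ H k i + b j - (Pi.single k 1 : Fin K → ℝ) j := by
    intro k i
    simp only [Pi.add_apply, Pi.sub_apply]
    rfl
  simp only [hL, hR]
  exact core hK hN H hG STd hSTd j (fun x => W j x) (b j)
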